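/- Let A be an n×n quaternion matrix, let k ≥ 1 be an integer, let D be a Drazin inverse of A with index k, and let Y be a Moore–Penrose inverse of A. Then the matrix M := Y·A·D satisfies M·A·M = M, A·M = A·D, and M·A^k = Y·A^k; moreover, M is the unique matrix satisfying these three equations (M is the MPD inverse A^{†,d} = A† A A^d of A). -/
import Mathlib


/-- The MPD inverse `A^{†,d} = A†·A·A^d`: the matrix `M = Y·A·D` satisfies
`M·A·M = M`, `A·M = A·D`, `M·A^k = Y·A^k`, and it is the unique matrix
satisfying these three equations. -/
theorem mpd_inverse {n : ℕ} (k : ℕ) (hk : 1 ≤ k)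
    (A D Y : Matrix (Fin n) (Fin n) (Quaternion ℝ))
    (hD1 : A * D = D * A) (hD2 : D * A * D = D) (hD3 : D * A ^ (k + 1) = A ^ k)
    (hY1 : A * Y * A = A) (hY2 : Y * A * Y = Y)
    (hY3 : (A * Y).conjTranspose = A * Y) (hY4 : (Y * A).conjTranspose = Y * A) :
    ((Y * A * D) * A * (Y * A * D) = Y * A * D ∧
     A * (Y * A * D) = A * D ∧
     (Y * A * D) * A ^ k = Y * A ^ k) ∧
    (∀ M : Matrix (Fin n) (Fin n) (Quaternion ℝ),
      M * A * M = M → A * M = A * D → M * A ^ k = Y * A ^ k →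
      M = Y * A * D) := by
  have hc : Commute A D := hD1
  -- (A*D) is idempotent
  have hid : (A * D) * (A * D) = A * D := by
    calc (A * D) * (A * D) = A * (D * A * D) := by
          rw [mul_assoc, ← mul_assoc D]
      _ = A * D := by rw [hD2]
  -- key : A^(m+1) * D^(m+1) = A * D
  have key : ∀ m : ℕ, A ^ (m + 1) * D ^ (m + 1) = A * D := by
    intro m
    rw [← hc.mul_pow]
    induction m with
    | zero => rw [pow_one]
    | succ m ih => rw [pow_succ, ih, hid]
  refine ⟨⟨?_, ?_, ?_⟩, ?_⟩
  · calc (Y * A * D) * A * (Y * A * D)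
        = Y * A * (D * (A * Y * A) * D) := by
          simp only [mul_assoc]
      _ = Y * A * (D * A * D) := by rw [hY1]
      _ = Y * A * D := by rw [hD2]
  · calc A * (Y * A * D) = (A * Y * A) * D := by simp only [mul_assoc]
      _ = A * D := by rw [hY1]
  · calc (Y * A * D) * A ^ k = Y * ((A * D) * A ^ k) := by simp only [mul_assoc]
      _ = Y * (D * (A * A ^ k)) := by rw [hD1, mul_assoc]
      _ = Y * (D * A ^ (k + 1)) := by rw [← pow_succ']
      _ = Y * A ^ k := by rw [hD3]
  · intro M hM1 hM2 hM3
    calc M = M * (A * M) := by rw [← mul_assoc, hM1]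
      _ = M * (A * D) := by rw [hM2]
      _ = M * (A ^ (k + 1) * D ^ (k + 1)) := by rw [key]
      _ = (M * A ^ k) * (A * D ^ (k + 1)) := by
          rw [pow_succ]; simp only [mul_assoc]
      _ = Y * (A ^ k * A * D ^ (k + 1)) := by rw [hM3]; simp only [mul_assoc]
      _ = Y * (A ^ (k + 1) * D ^ (k + 1)) := by rw [← pow_succ]
      _ = Y * (A * D) := by rw [key]
      _ = Y * A * D := by rw [mul_assoc]
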